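/- Let G be a finite connected simple graph and let x, y be vertices of G. Then x ~ y (i.e., x and y lie in the same edge-biconnected component) if and only if there is a closed walk in G with no repeated edges (a closed trail) that passes through both x and y. -/

import Mathlib

open SimpleGraph

section Aux

variable {V : Type*} {G : SimpleGraph V}

/-- First-hit prefix of a walk into a set `S`. -/
private lemma firstHit {S : Set V} :
    ∀ {u v : V} (w : G.Walk u v), u ∉ S → v ∈ S →
      ∃ a, a ∈ S ∧ ∃ p : G.Walk u a, List.Sublist p.edges w.edges ∧
        ∀ c ∈ p.support, c ∈ S → c = a := by
  intro u v w
  induction w with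
  | nil => intro hu hv; exact absurd hv hu
  | @cons u b v h q ih =>
    intro hu hv
    by_cases hb : b ∈ S
    · refine ⟨b, hb, Walk.cons h Walk.nil, ?_, ?_⟩
      · simp [(List.nil_sublist q.edges).cons₂ s(u, b)]
      · intro c hc hcS
        simp only [Walk.support_cons, Walk.support_nil, List.mem_cons,
          List.mem_singleton, List.not_mem_nil, or_false] at hc
        rcases hc with rfl | rfl
        · exact absurd hcS hu
        · rfl
    · obtain ⟨a, haS, p, hsub, hfirst⟩ := ih hb hv
      refine ⟨a, haS, Walk.cons h p, ?_, ?_⟩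
      · simpa using hsub.cons₂ s(u, b)
      · intro c hc hcS
        simp only [Walk.support_cons, List.mem_cons] at hc
        rcases hc with rfl | hc
        · exact absurd hcS hu
        · exact hfirst c hc hcS

/-- If all support vertices of `p` lying in `T`'s support equal the endpoint `a`,
then `p` and `T` are edge-disjoint. -/
private lemma edges_disjoint_of_firstHit {y a w w' : V} {p : G.Walk y a} {T : G.Walk w w'}
    (hfirst : ∀ c ∈ p.support, c ∈ T.support → c = a) :
    ∀ e ∈ p.edges, e ∉ T.edges := by
  intro e he heT
  induction e with
  | _ c d =>
    have hadj : G.Adj c d := T.adj_of_mem_edges heT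
    have hc : c = a := hfirst c (p.fst_mem_support_of_mem_edges he)
      (T.fst_mem_support_of_mem_edges heT)
    have hd : d = a := hfirst d (p.snd_mem_support_of_mem_edges he)
      (T.snd_mem_support_of_mem_edges heT)
    exact hadj.ne (hc.trans hd.symm)

private lemma mem_support_rotate [DecidableEq V] {v w : V} {c : G.Walk v v}
    (h : w ∈ c.support) {d : V} (hd : d ∈ c.support) : d ∈ (c.rotate w h).support := by
  rw [Walk.rotate, Walk.mem_support_append_iff]
  rw [← c.take_spec h, Walk.mem_support_append_iff] at hd
  tauto

/-- Assemble a closed trail from three pairwise edge-disjoint trails. -/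
private lemma assemble_isTrail {y a b : V} {S1 : G.Walk y a} {C : G.Walk a b} {S2 : G.Walk y b}
    (h1 : S1.edges.Nodup) (hC : C.edges.Nodup) (h2 : S2.edges.Nodup)
    (d1C : ∀ e ∈ S1.edges, e ∉ C.edges) (d2C : ∀ e ∈ S2.edges, e ∉ C.edges)
    (d12 : ∀ e ∈ S1.edges, e ∉ S2.edges) :
    (S1.append (C.append S2.reverse)).IsTrail := by
  rw [Walk.isTrail_def, Walk.edges_append, Walk.edges_append, Walk.edges_reverse]
  rw [List.nodup_append, List.nodup_append]
  refine ⟨h1, ⟨hC, by simpa using h2, ?_⟩, ?_⟩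
  · intro e heC f heS2 hef
    subst hef
    rw [List.mem_reverse] at heS2
    exact d2C e heS2 heC
  · intro e heS1 f he hef
    subst hef
    rw [List.mem_append, List.mem_reverse] at he
    rcases he with he | he
    · exact d1C e heS1 he
    · exact d12 e heS1 he

/-- Merging two closed trails sharing a vertex `z` into one closed trail through
`x` (on the first) and `y` (on the second). -/
private lemma merge_trails {u v x z y : V} {T1 : G.Walk u u} {T2 : G.Walk v v}
    (h1 : T1.IsTrail) (h2 : T2.IsTrail) (hx : x ∈ T1.support) (hz1 : z ∈ T1.support)
    (hz2 : z ∈ T2.support) (hy : y ∈ T2.support) :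
    ∃ (u' : V) (W : G.Walk u' u'), W.IsTrail ∧ x ∈ W.support ∧ y ∈ W.support := by
  classical
  by_cases hyT1 : y ∈ T1.support
  · exact ⟨u, T1, h1, hx, hyT1⟩
  -- rotate T2 at y and split at z
  set T2y : G.Walk y y := T2.rotate y hy with hT2y
  have hz2y : z ∈ T2y.support := mem_support_rotate hy hz2
  have htr2 : T2y.IsTrail := h2.rotate hy
  set w1 : G.Walk y z := T2y.takeUntil z hz2y with hw1
  set w2 : G.Walk z y := T2y.dropUntil z hz2y with hw2
  have hspec : w1.append w2 = T2y := T2y.take_spec hz2y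
  have hnd : (w1.edges ++ w2.edges).Nodup := by
    rw [← Walk.edges_append, hspec]; exact htr2.edges_nodup
  rw [List.nodup_append] at hnd
  obtain ⟨hnd1, hnd2, hdisj12⟩ := hnd
  -- two edge-disjoint arcs from y to the support of T1
  obtain ⟨a, haS, S1, hsub1, hfirst1⟩ :=
    firstHit (S := {c | c ∈ T1.support}) w1 hyT1 hz1
  obtain ⟨b, hbS, S2, hsub2, hfirst2⟩ :=
    firstHit (S := {c | c ∈ T1.support}) w2.reverse hyT1 hz1
  have hS1nd : S1.edges.Nodup := hnd1.sublist hsub1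
  have hS2nd : S2.edges.Nodup := by
    have : w2.reverse.edges.Nodup := by simpa [Walk.edges_reverse] using hnd2
    exact this.sublist hsub2
  have hS1T1 : ∀ e ∈ S1.edges, e ∉ T1.edges := edges_disjoint_of_firstHit hfirst1
  have hS2T1 : ∀ e ∈ S2.edges, e ∉ T1.edges := edges_disjoint_of_firstHit hfirst2
  have hS1S2 : ∀ e ∈ S1.edges, e ∉ S2.edges := by
    intro e he1 he2
    have h1' : e ∈ w1.edges := hsub1.subset he1
    have h2' : e ∈ w2.edges := by
      have := hsub2.subset he2
      simpa [Walk.edges_reverse] using this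
    exact hdisj12 e h1' e h2' rfl
  -- rotate T1 at a and split at b
  set T1a : G.Walk a a := T1.rotate a haS with hT1a
  have htr1 : T1a.IsTrail := h1.rotate haS
  have hbT1a : b ∈ T1a.support := mem_support_rotate haS hbS
  have hxT1a : x ∈ T1a.support := mem_support_rotate haS hx
  have hT1aedges : ∀ e ∈ T1a.edges, e ∈ T1.edges := fun e he =>
    (T1.rotate_edges _ haS).perm.subset he
  set A : G.Walk a b := T1a.takeUntil b hbT1a with hA
  set B : G.Walk b a := T1a.dropUntil b hbT1a with hB
  have hxAB : x ∈ A.support ∨ x ∈ B.support := by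
    rw [← T1a.take_spec hbT1a, Walk.mem_support_append_iff] at hxT1a
    exact hxT1a
  rcases hxAB with hxA | hxB
  · -- W = S1 ++ A ++ S2.reverse
    refine ⟨y, S1.append (A.append S2.reverse), ?_, ?_, Walk.start_mem_support _⟩
    · refine assemble_isTrail hS1nd (htr1.takeUntil hbT1a).edges_nodup hS2nd ?_ ?_ hS1S2
      · exact fun e he heC => hS1T1 e he (hT1aedges e (T1a.edges_takeUntil_subset_edges hbT1a heC))
      · exact fun e he heC => hS2T1 e he (hT1aedges e (T1a.edges_takeUntil_subset_edges hbT1a heC))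
    · rw [Walk.mem_support_append_iff, Walk.mem_support_append_iff]
      exact Or.inr (Or.inl hxA)
  · -- W = S2 ++ B ++ S1.reverse  (i.e. from y via b, B to a, back via S1)
    refine ⟨y, S2.append (B.append S1.reverse), ?_, ?_, Walk.start_mem_support _⟩
    · refine assemble_isTrail hS2nd (htr1.dropUntil hbT1a).edges_nodup hS1nd ?_ ?_
        (fun e he he' => hS1S2 e he' he)
      · exact fun e he heC => hS2T1 e he (hT1aedges e (T1a.edges_dropUntil_subset_edges hbT1a heC))
      · exact fun e he heC => hS1T1 e he (hT1aedges e (T1a.edges_dropUntil_subset_edges hbT1a heC))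
    · rw [Walk.mem_support_append_iff, Walk.mem_support_append_iff]
      exact Or.inr (Or.inl hxB)

/-- Hard direction, by induction along a path from `x` to `y`. -/
private lemma exists_trail_aux :
    ∀ {x y : V} (p : G.Walk x y), p.IsPath →
      (∀ e ∈ G.edgeSet, (G.deleteEdges {e}).Reachable x y) →
      ∃ (u : V) (w : G.Walk u u), w.IsTrail ∧ x ∈ w.support ∧ y ∈ w.support := by
  intro x y p
  induction p with
  | nil =>
    intro _ _
    exact ⟨_, Walk.nil, by simp [Walk.isTrail_def], Walk.start_mem_support _,
      Walk.start_mem_support _⟩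
  | @cons x x' y h q ih =>
    intro hp hxy
    classical
    rw [Walk.cons_isPath_iff] at hp
    obtain ⟨hq, hxq⟩ := hp
    have heE : s(x, x') ∈ G.edgeSet := h
    have heq : s(x, x') ∉ q.edges := fun hc => hxq (q.fst_mem_support_of_mem_edges hc)
    -- x' ~ y
    have hx'y : ∀ f ∈ G.edgeSet, (G.deleteEdges {f}).Reachable x' y := by
      intro f hf
      by_cases hfe : f = s(x, x')
      · subst hfe
        exact ⟨q.toDeleteEdge _ heq⟩
      · have hadj : (G.deleteEdges {f}).Adj x x' := by
          rw [deleteEdges_adj]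
          exact ⟨h, by simpa [eq_comm] using hfe⟩
        exact hadj.symm.reachable.trans (hxy f hf)
    obtain ⟨u, T1, hT1, hx'T1, hyT1⟩ := ih hq hx'y
    -- build a cycle T2 through x and x'
    have hRxx' : (G.deleteEdges {s(x, x')}).Reachable x x' :=
      (hxy _ heE).trans (Reachable.symm ⟨q.toDeleteEdge _ heq⟩)
    obtain ⟨R0⟩ := hRxx'
    set P : (G.deleteEdges {s(x, x')}).Walk x x' := R0.toPath.val with hPdef
    have hP : P.IsPath := R0.toPath.property
    have hPedges : ∀ e ∈ P.edges, e ∈ G.edgeSet := fun e he => by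
      have := P.edges_subset_edgeSet he
      rw [edgeSet_deleteEdges] at this
      exact this.1
    have hPe : s(x, x') ∉ P.edges := fun hc => by
      have := P.edges_subset_edgeSet hc
      rw [edgeSet_deleteEdges] at this
      exact this.2 rfl
    set Pm : G.Walk x x' := P.transfer G hPedges with hPm
    have hPmedges : Pm.edges = P.edges := P.edges_transfer hPedges
    set T2 : G.Walk x x := Walk.cons h Pm.reverse with hT2def
    have hT2 : T2.IsTrail := by
      rw [Walk.isTrail_def, hT2def, Walk.edges_cons, Walk.edges_reverse, List.nodup_cons]
      constructor
      · rw [List.mem_reverse, hPmedges]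
        exact hPe
      · rw [List.nodup_reverse, hPmedges]
        exact hP.isTrail.edges_nodup
    have hxT2 : x ∈ T2.support := Walk.start_mem_support _
    have hx'T2 : x' ∈ T2.support := by
      rw [hT2def, Walk.support_cons]
      exact List.mem_cons_of_mem _ (Walk.start_mem_support _)
    exact merge_trails hT2 hT1 hxT2 hx'T2 hx'T1 hyT1

end Aux

/-- In a finite connected simple graph `G`, vertices `x` and `y`
satisfy `x ~ y` (they remain connected after deletion of any single edge) iff some
closed trail (closed walk with no repeated edges) of `G` passes through both `x`
and `y`. -/
theorem same_component_iff_closed_trail {V : Type*} [Fintype V]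
    (G : SimpleGraph V) (hG : G.Connected) (x y : V) :
    (∀ e ∈ G.edgeSet, (G.deleteEdges {e}).Reachable x y) ↔
    ∃ (u : V) (w : G.Walk u u), w.IsTrail ∧ x ∈ w.support ∧ y ∈ w.support := by
  constructor
  · intro hxy
    classical
    obtain ⟨w⟩ := hG.preconnected x y
    exact exists_trail_aux w.toPath.val w.toPath.property hxy
  · rintro ⟨u, w, hw, hx, hy⟩ e he
    classical
    set wx : G.Walk x x := w.rotate x hx with hwx
    have hwxt : wx.IsTrail := hw.rotate hx
    have hywx : y ∈ wx.support := mem_support_rotate hx hy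
    set A : G.Walk x y := wx.takeUntil y hywx with hA
    set B : G.Walk y x := wx.dropUntil y hywx with hB
    have hnd : (A.edges ++ B.edges).Nodup := by
      rw [← Walk.edges_append, wx.take_spec hywx]
      exact hwxt.edges_nodup
    rw [List.nodup_append] at hnd
    by_cases heA : e ∈ A.edges
    · have heB : e ∉ B.edges := fun h => hnd.2.2 e heA e h rfl
      have heB' : e ∉ B.reverse.edges := by rwa [Walk.edges_reverse, List.mem_reverse]
      exact ⟨B.reverse.toDeleteEdge e heB'⟩
    · exact ⟨A.toDeleteEdge e heA⟩
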